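/- Let δ ∈ ℝ. Define the watermarked selection probabilities P_W^i(ω) = (1/2 + ε(ω))·e^δ / ((1/2 + ε(ω))·e^δ + (1/2 − ε(ω))) and P_W^j(ω) = (1/2 − ε(ω)) / ((1/2 + ε(ω))·e^δ + (1/2 − ε(ω))). Then E_μ[log(P_W^i / P_W^j)] = δ; i.e., the relative probability ratio R = log(P_W^i / P_W^j) is an unbiased estimator of the watermark strength δ when token T_i is in the green list and token T_j is in the red list. -/
import Mathlib


open MeasureTheory

/-- The relative probability ratio is an unbiased estimator of the watermark
strength `δ` when `T_i` is green and `T_j` is red. -/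
theorem unbiased_estimator_of_delta
    {Ω : Type*} [MeasurableSpace Ω] (μ : Measure Ω) [IsProbabilityMeasure μ]
    (ε : Ω → ℝ) (hmeas : Measurable ε)
    (hbound : ∀ᵐ ω ∂μ, |ε ω| < 1/2)
    (hsym : Measure.map ε μ = Measure.map (fun ω => -ε ω) μ)
    (hint : Integrable (fun ω => Real.log ((1/2 + ε ω) / (1/2 - ε ω))) μ)
    (δ : ℝ) :
    ∫ ω, Real.log
        (((1/2 + ε ω) * Real.exp δ / ((1/2 + ε ω) * Real.exp δ + (1/2 - ε ω)))
          / ((1/2 - ε ω) / ((1/2 + ε ω) * Real.exp δ + (1/2 - ε ω)))) ∂μ = δ := by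
  set g : ℝ → ℝ := fun x => Real.log ((1/2 + x) / (1/2 - x)) with hg
  have hgmeas : Measurable g :=
    Real.measurable_log.comp
      ((measurable_const.add measurable_id).div (measurable_const.sub measurable_id))
  have hodd : ∀ x : ℝ, g (-x) = - g x := by
    intro x
    simp only [hg]
    rw [← Real.log_inv, inv_div]
    ring_nf
  have hzero : ∫ ω, g (ε ω) ∂μ = 0 := by
    have h1 : ∫ ω, g (ε ω) ∂μ = ∫ x, g x ∂(Measure.map ε μ) :=
      (integral_map hmeas.aemeasurable hgmeas.aestronglyMeasurable).symm
    have h2 : ∫ x, g x ∂(Measure.map (fun ω => -ε ω) μ) = ∫ ω, g (-ε ω) ∂μ :=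
      integral_map hmeas.neg.aemeasurable hgmeas.aestronglyMeasurable
    have h3 : ∫ ω, g (-ε ω) ∂μ = - ∫ ω, g (ε ω) ∂μ := by
      simp_rw [hodd]; exact integral_neg _
    have h4 : ∫ ω, g (ε ω) ∂μ = - ∫ ω, g (ε ω) ∂μ :=
      h1.trans (by rw [hsym, h2, h3])
    linarith
  have hae : ∀ᵐ ω ∂μ, Real.log
      (((1/2 + ε ω) * Real.exp δ / ((1/2 + ε ω) * Real.exp δ + (1/2 - ε ω)))
        / ((1/2 - ε ω) / ((1/2 + ε ω) * Real.exp δ + (1/2 - ε ω))))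
      = δ + g (ε ω) := by
    filter_upwards [hbound] with ω hω
    obtain ⟨ha, hb⟩ := abs_lt.mp hω
    have h1 : 0 < 1/2 + ε ω := by linarith
    have h2 : 0 < 1/2 - ε ω := by linarith
    have hD : 0 < (1/2 + ε ω) * Real.exp δ + (1/2 - ε ω) :=
      add_pos (mul_pos h1 (Real.exp_pos δ)) h2
    have key : ((1/2 + ε ω) * Real.exp δ / ((1/2 + ε ω) * Real.exp δ + (1/2 - ε ω)))
        / ((1/2 - ε ω) / ((1/2 + ε ω) * Real.exp δ + (1/2 - ε ω)))
        = Real.exp δ * ((1/2 + ε ω) / (1/2 - ε ω)) := by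
      have cancel : ∀ a b D : ℝ, D ≠ 0 → a / D / (b / D) = a / b := by
        intro a b D hDne
        rw [div_div_div_eq, mul_comm D b, mul_div_mul_right _ _ hDne]
      rw [cancel _ _ _ hD.ne', mul_comm, mul_div_assoc]
    rw [key, Real.log_mul (Real.exp_pos δ).ne'
      (div_pos h1 h2).ne', Real.log_exp, hg]
  rw [integral_congr_ae hae, integral_add (integrable_const δ) hint,
    integral_const, hzero]
  simp
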